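/- Let a < b, let f : [a,b] → ℝ be càdlàg on [a,b], and let c > 0 satisfy c ≤ sup_{s,u ∈ [a,b]} |f(s) − f(u)|. Suppose g₁, g₂ : [a,b] → ℝ each satisfy: sup_{s ∈ [a,b]} |f(s) − gᵢ(s)| ≤ c/2, TV(gᵢ,[a,b]) < ∞, and TV(gᵢ,[a,s]) ≤ TV^c(f,[a,s]) for every s ∈ (a,b]. Then g₁ = g₂ on [a,b]. -/

import Mathlib

open Set Filter Topology ENNReal

/-- Truncated variation `TV^c(f,[a,b])` as a supremum over partitions, valued in `[0,∞]`. -/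
noncomputable def truncVar (f : ℝ → ℝ) (a b c : ℝ) : ℝ≥0∞ :=
  ⨆ (n : ℕ) (t : ℕ → ℝ) (_ : a ≤ t 0) (_ : ∀ i < n, t i < t (i + 1)) (_ : t n ≤ b),
    ∑ i ∈ Finset.range n, ENNReal.ofReal (max (|f (t (i + 1)) - f (t i)| - c) 0)

/-- Total variation `TV(f,[a,b])`, valued in `[0,∞]`. -/
noncomputable def totalVar (f : ℝ → ℝ) (a b : ℝ) : ℝ≥0∞ := truncVar f a b 0

/-- Upward truncated variation `UTV^c(f,[a,b])`. -/
noncomputable def upTruncVar (f : ℝ → ℝ) (a b c : ℝ) : ℝ≥0∞ :=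
  ⨆ (n : ℕ) (t : ℕ → ℝ) (_ : a ≤ t 0) (_ : ∀ i < n, t i < t (i + 1)) (_ : t n ≤ b),
    ∑ i ∈ Finset.range n, ENNReal.ofReal (max (f (t (i + 1)) - f (t i) - c) 0)

/-- Downward truncated variation `DTV^c(f,[a,b])`. -/
noncomputable def downTruncVar (f : ℝ → ℝ) (a b c : ℝ) : ℝ≥0∞ :=
  ⨆ (n : ℕ) (t : ℕ → ℝ) (_ : a ≤ t 0) (_ : ∀ i < n, t i < t (i + 1)) (_ : t n ≤ b),
    ∑ i ∈ Finset.range n, ENNReal.ofReal (max (f (t i) - f (t (i + 1)) - c) 0)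

/-- `f` is càdlàg on `[a,b]`: right-continuous at every point of `[a,b)` and
with a finite left limit at every point of `(a,b]`. -/
def CadlagOn (f : ℝ → ℝ) (a b : ℝ) : Prop :=
  (∀ x ∈ Set.Ico a b, Filter.Tendsto f (𝓝[>] x) (𝓝 (f x))) ∧
  (∀ x ∈ Set.Ioc a b, ∃ L : ℝ, Filter.Tendsto f (𝓝[<] x) (𝓝 L))

namespace OptApproxAux

/-- ENNReal partition sum. -/
noncomputable def pS (φ g : ℝ → ℝ) (n : ℕ) (t : ℕ → ℝ) : ℝ≥0∞ :=
  ∑ i ∈ Finset.range n, ENNReal.ofReal (φ (g (t (i + 1)) - g (t i)))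

/-- Real partition sum. -/
def rS (φ g : ℝ → ℝ) (n : ℕ) (t : ℕ → ℝ) : ℝ :=
  ∑ i ∈ Finset.range n, φ (g (t (i + 1)) - g (t i))

noncomputable def pVar (φ g : ℝ → ℝ) (a b : ℝ) : ℝ≥0∞ :=
  ⨆ (n : ℕ) (t : ℕ → ℝ) (_ : a ≤ t 0) (_ : ∀ i < n, t i < t (i + 1)) (_ : t n ≤ b),
    pS φ g n t

/-- endpoint partitions of [a,b] -/
def EP (a b : ℝ) : Type :=
  {p : ℕ × (ℕ → ℝ) // p.2 0 = a ∧ (∀ i < p.1, p.2 i < p.2 (i + 1)) ∧ p.2 p.1 = b}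

lemma EP.nonempty {a b : ℝ} (hab : a < b) : Nonempty (EP a b) :=
  ⟨⟨(1, fun i => if i = 0 then a else b), rfl, by
      intro i hi
      interval_cases i
      simpa using hab, rfl⟩⟩

noncomputable def eVar (φ g : ℝ → ℝ) (a b : ℝ) : ℝ≥0∞ :=
  ⨆ p : EP a b, pS φ g p.1.1 p.1.2

lemma t_mono {n : ℕ} {t : ℕ → ℝ} (h : ∀ i < n, t i < t (i + 1)) :
    ∀ i j, i ≤ j → j ≤ n → t i ≤ t j := by
  intro i j hij hjn
  induction j with
  | zero => simp [Nat.le_zero.mp hij]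
  | succ k ih =>
    rcases Nat.lt_or_ge i (k + 1) with h' | h'
    · exact le_trans (ih (Nat.lt_succ_iff.mp h') (le_trans (Nat.le_succ k) hjn))
        (le_of_lt (h k (Nat.lt_of_lt_of_le (Nat.lt_succ_self k) hjn)))
    · have : i = k + 1 := le_antisymm hij h'
      simp [this]

lemma le_pVar {φ g : ℝ → ℝ} {a b : ℝ} {n : ℕ} {t : ℕ → ℝ}
    (h1 : a ≤ t 0) (h2 : ∀ i < n, t i < t (i + 1)) (h3 : t n ≤ b) :
    pS φ g n t ≤ pVar φ g a b := by
  unfold pVar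
  exact le_iSup_of_le n (le_iSup_of_le t (le_iSup_of_le h1 (le_iSup_of_le h2
    (le_iSup_of_le h3 le_rfl))))

lemma pVar_le {φ g : ℝ → ℝ} {a b : ℝ} {X : ℝ≥0∞}
    (h : ∀ n t, a ≤ t 0 → (∀ i < n, t i < t (i + 1)) → t n ≤ b → pS φ g n t ≤ X) :
    pVar φ g a b ≤ X :=
  iSup_le fun n => iSup_le fun t => iSup_le fun h1 => iSup_le fun h2 => iSup_le fun h3 =>
    h n t h1 h2 h3

lemma pVar_mono_fun {φ ψ f g : ℝ → ℝ} {a b : ℝ}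
    (h : ∀ u v, u ∈ Icc a b → v ∈ Icc a b → u < v → φ (f v - f u) ≤ ψ (g v - g u))
    (hψ : ∀ x, 0 ≤ ψ x) :
    pVar φ f a b ≤ pVar ψ g a b := by
  refine pVar_le fun n t h1 h2 h3 => le_trans ?_ (le_pVar h1 h2 h3)
  refine Finset.sum_le_sum fun i hi => ?_
  have hi' := Finset.mem_range.mp hi
  have hui : t i ∈ Icc a b :=
    ⟨le_trans h1 (t_mono h2 0 i (Nat.zero_le _) (le_of_lt hi')),
      le_trans (t_mono h2 i n (le_of_lt hi') le_rfl) h3⟩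
  have hvi : t (i + 1) ∈ Icc a b :=
    ⟨le_trans h1 (t_mono h2 0 (i + 1) (Nat.zero_le _) hi'),
      le_trans (t_mono h2 (i + 1) n hi' le_rfl) h3⟩
  exact ENNReal.ofReal_le_ofReal (h _ _ hui hvi (h2 i hi'))

lemma pVar_mono_right {φ g : ℝ → ℝ} {a s b : ℝ} (hsb : s ≤ b) :
    pVar φ g a s ≤ pVar φ g a b :=
  pVar_le fun _ _ h1 h2 h3 => le_pVar h1 h2 (le_trans h3 hsb)

lemma max_abs_split {c : ℝ} (hc : 0 ≤ c) (x : ℝ) :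
    max (|x| - c) 0 = max (x - c) 0 + max (-x - c) 0 := by
  rcases le_total 0 x with hx | hx
  · rw [abs_of_nonneg hx, max_eq_right (by linarith : -x - c ≤ 0), add_zero]
  · rw [abs_of_nonpos hx, max_eq_right (by linarith : x - c ≤ 0), zero_add]

lemma pVar_abs_split {f : ℝ → ℝ} {a b c : ℝ} (hc : 0 ≤ c) :
    pVar (fun x => max (|x| - c) 0) f a b ≤
      pVar (fun x => max (x - c) 0) f a b + pVar (fun x => max (-x - c) 0) f a b := by
  refine pVar_le fun n t h1 h2 h3 => ?_
  have hsplit : pS (fun x => max (|x| - c) 0) f n t =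
      pS (fun x => max (x - c) 0) f n t + pS (fun x => max (-x - c) 0) f n t := by
    unfold pS
    rw [← Finset.sum_add_distrib]
    refine Finset.sum_congr rfl fun i _ => ?_
    rw [← ENNReal.ofReal_add (le_max_right _ _) (le_max_right _ _)]
    exact congrArg ENNReal.ofReal (max_abs_split hc _)
  rw [hsplit]
  exact add_le_add (le_pVar h1 h2 h3) (le_pVar h1 h2 h3)

/-- extend a partition on the right to reach `b`. -/
lemma snoc_ext {n : ℕ} {t : ℕ → ℝ} {b : ℝ} (h2 : ∀ i < n, t i < t (i + 1)) (hlt : t n < b) :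
    ∃ m u, u 0 = t 0 ∧ (∀ i < m, u i < u (i + 1)) ∧ u m = b ∧
      ∀ φ g, pS φ g n t ≤ pS φ g m u := by
  refine ⟨n + 1, fun i => if i ≤ n then t i else b, by simp, ?_, by simp, ?_⟩
  · intro i hi
    rcases Nat.lt_or_ge i n with h | h
    · simp only [if_pos (le_of_lt h), if_pos (Nat.succ_le_of_lt h)]
      exact h2 i h
    · have : i = n := le_antisymm (Nat.lt_succ_iff.mp hi) h
      subst this
      simp only [le_refl, if_pos, if_neg (Nat.not_succ_le_self i)]
      exact hlt
  · intro φ g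
    unfold pS
    rw [Finset.sum_range_succ]
    refine le_trans (le_of_eq ?_) le_self_add
    refine Finset.sum_congr rfl fun i hi => ?_
    have hi' := Finset.mem_range.mp hi
    simp only [if_pos (le_of_lt hi'), if_pos (Nat.succ_le_of_lt hi')]

/-- extend a partition on the left to start at `a`. -/
lemma cons_ext {n : ℕ} {t : ℕ → ℝ} {a : ℝ} (h2 : ∀ i < n, t i < t (i + 1)) (hlt : a < t 0) :
    ∃ m u, u 0 = a ∧ (∀ i < m, u i < u (i + 1)) ∧ u m = t n ∧
      ∀ φ g, pS φ g n t ≤ pS φ g m u := by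
  refine ⟨n + 1, fun i => if i = 0 then a else t (i - 1), rfl, ?_, by simp, ?_⟩
  · intro i hi
    cases i with
    | zero => simpa using hlt
    | succ j =>
      simp only [Nat.succ_ne_zero, if_neg, Nat.add_sub_cancel]
      exact h2 j (Nat.lt_of_succ_lt_succ hi)
  · intro φ g
    unfold pS
    rw [Finset.sum_range_succ']
    refine le_trans (le_of_eq ?_) le_self_add
    refine Finset.sum_congr rfl fun i hi => ?_
    simp

lemma endpoint_ext {a b : ℝ} (hab : a < b) {n : ℕ} {t : ℕ → ℝ}
    (h1 : a ≤ t 0) (h2 : ∀ i < n, t i < t (i + 1)) (h3 : t n ≤ b) :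
    ∃ p : EP a b, ∀ φ g, pS φ g n t ≤ pS φ g p.1.1 p.1.2 := by
  -- first extend on the right
  obtain ⟨m₁, u₁, hu10, hu1m, hu1b, hle1⟩ :
      ∃ m u, u 0 = t 0 ∧ (∀ i < m, u i < u (i + 1)) ∧ u m = b ∧
        ∀ φ g, pS φ g n t ≤ pS φ g m u := by
    rcases eq_or_lt_of_le h3 with h | h
    · exact ⟨n, t, rfl, h2, h, fun φ g => le_rfl⟩
    · exact snoc_ext h2 h
  rcases eq_or_lt_of_le h1 with h | h
  · exact ⟨⟨(m₁, u₁), hu10.trans h.symm, hu1m, hu1b⟩, hle1⟩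
  · obtain ⟨m₂, u₂, hu20, hu2m, hu2e, hle2⟩ := cons_ext hu1m (by rwa [hu10])
    exact ⟨⟨(m₂, u₂), hu20, hu2m, hu2e.trans hu1b⟩, fun φ g =>
      le_trans (hle1 φ g) (hle2 φ g)⟩

lemma le_eVar {φ g : ℝ → ℝ} {a b : ℝ} (p : EP a b) :
    pS φ g p.1.1 p.1.2 ≤ eVar φ g a b :=
  le_iSup (fun q : EP a b => pS φ g q.1.1 q.1.2) p

lemma pVar_eq_eVar {φ g : ℝ → ℝ} {a b : ℝ} (hab : a < b) :
    pVar φ g a b = eVar φ g a b := by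
  apply le_antisymm
  · refine pVar_le fun n t h1 h2 h3 => ?_
    obtain ⟨p, hp⟩ := endpoint_ext hab h1 h2 h3
    exact le_trans (hp φ g) (le_eVar p)
  · refine iSup_le fun p => le_pVar (le_of_eq p.2.1.symm) p.2.2.1 (le_of_eq p.2.2.2)

lemma pS_eq_ofReal {φ g : ℝ → ℝ} {n : ℕ} {t : ℕ → ℝ} (hφ : ∀ x, 0 ≤ φ x) :
    pS φ g n t = ENNReal.ofReal (rS φ g n t) :=
  (ENNReal.ofReal_sum_of_nonneg fun i _ => hφ _).symm

lemma rS_nonneg {φ g : ℝ → ℝ} {n : ℕ} {t : ℕ → ℝ} (hφ : ∀ x, 0 ≤ φ x) :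
    0 ≤ rS φ g n t :=
  Finset.sum_nonneg fun i _ => hφ _

lemma rS_telescope {g : ℝ → ℝ} {n : ℕ} {t : ℕ → ℝ} :
    rS (fun x => max x 0) g n t - rS (fun x => max (-x) 0) g n t = g (t n) - g (t 0) := by
  unfold rS
  rw [← Finset.sum_sub_distrib]
  have h : ∀ i ∈ Finset.range n,
      max (g (t (i + 1)) - g (t i)) 0 - max (-(g (t (i + 1)) - g (t i))) 0 =
        g (t (i + 1)) - g (t i) := fun i _ => max_zero_sub_max_neg_zero_eq_self _
  rw [Finset.sum_congr rfl h]
  exact Finset.sum_range_sub (fun i => g (t i)) n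

lemma rS_abs_eq {g : ℝ → ℝ} {n : ℕ} {t : ℕ → ℝ} :
    rS (fun x => max (|x| - 0) 0) g n t =
      rS (fun x => max x 0) g n t + rS (fun x => max (-x) 0) g n t := by
  unfold rS
  rw [← Finset.sum_add_distrib]
  refine Finset.sum_congr rfl fun i _ => ?_
  dsimp only
  rw [sub_zero, max_eq_left (abs_nonneg _)]
  rcases le_total 0 (g (t (i + 1)) - g (t i)) with h | h
  · rw [abs_of_nonneg h, max_eq_left h, max_eq_right (neg_nonpos.mpr h), add_zero]
  · rw [abs_of_nonpos h, max_eq_right h, max_eq_left (neg_nonneg.mpr h), zero_add]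


lemma posmax_nonneg : ∀ x : ℝ, 0 ≤ max x 0 := fun _ => le_max_right _ _
lemma negmax_nonneg : ∀ x : ℝ, 0 ≤ max (-x) 0 := fun _ => le_max_right _ _
lemma absmax_nonneg (c : ℝ) : ∀ x : ℝ, 0 ≤ max (|x| - c) 0 := fun _ => le_max_right _ _

lemma eVar_add_le {φ ψ : ℝ → ℝ} {g : ℝ → ℝ} {a b : ℝ} (hab : a < b) {T : ℝ≥0∞}
    (H : ∀ p q : EP a b, pS φ g p.1.1 p.1.2 + pS ψ g q.1.1 q.1.2 ≤ T) :
    eVar φ g a b + eVar ψ g a b ≤ T := by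
  haveI := EP.nonempty hab
  unfold eVar
  rw [iSup_add]
  refine iSup_le fun p => ?_
  rw [add_iSup]
  exact iSup_le fun q => H p q

lemma key_telescope {g : ℝ → ℝ} {a s : ℝ} (r : EP a s) :
    rS (fun x => max x 0) g r.1.1 r.1.2 - rS (fun x => max (-x) 0) g r.1.1 r.1.2
      = g s - g a := by
  rw [rS_telescope, r.2.1, r.2.2.2]

lemma jordan {g : ℝ → ℝ} {a s : ℝ} (has : a < s) :
    pVar (fun x => max x 0) g a s + pVar (fun x => max (-x) 0) g a s ≤
      pVar (fun x => max (|x| - 0) 0) g a s := by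
  rw [pVar_eq_eVar has, pVar_eq_eVar has]
  refine eVar_add_le has fun p q => ?_
  have hkp := key_telescope (g := g) p
  have hkq := key_telescope (g := g) q
  rw [pS_eq_ofReal posmax_nonneg, pS_eq_ofReal negmax_nonneg,
    ← ENNReal.ofReal_add (rS_nonneg posmax_nonneg) (rS_nonneg negmax_nonneg)]
  rcases le_total (rS (fun x => max x 0) g p.1.1 p.1.2)
      (rS (fun x => max x 0) g q.1.1 q.1.2) with h | h
  · calc ENNReal.ofReal (rS (fun x => max x 0) g p.1.1 p.1.2 +
          rS (fun x => max (-x) 0) g q.1.1 q.1.2)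
        ≤ ENNReal.ofReal (rS (fun x => max (|x| - 0) 0) g q.1.1 q.1.2) := by
          rw [rS_abs_eq]; exact ENNReal.ofReal_le_ofReal (by linarith)
      _ = pS (fun x => max (|x| - 0) 0) g q.1.1 q.1.2 := (pS_eq_ofReal (absmax_nonneg 0)).symm
      _ ≤ _ := le_pVar (le_of_eq q.2.1.symm) q.2.2.1 (le_of_eq q.2.2.2)
  · calc ENNReal.ofReal (rS (fun x => max x 0) g p.1.1 p.1.2 +
          rS (fun x => max (-x) 0) g q.1.1 q.1.2)
        ≤ ENNReal.ofReal (rS (fun x => max (|x| - 0) 0) g p.1.1 p.1.2) := by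
          rw [rS_abs_eq]; exact ENNReal.ofReal_le_ofReal (by linarith)
      _ = pS (fun x => max (|x| - 0) 0) g p.1.1 p.1.2 := (pS_eq_ofReal (absmax_nonneg 0)).symm
      _ ≤ _ := le_pVar (le_of_eq p.2.1.symm) p.2.2.1 (le_of_eq p.2.2.2)

lemma ofReal_max0 (x : ℝ) : ENNReal.ofReal (max x 0) = ENNReal.ofReal x := by
  rcases le_total 0 x with h | h
  · rw [max_eq_left h]
  · rw [max_eq_right h, ENNReal.ofReal_of_nonpos h, ENNReal.ofReal_zero]

lemma add_max_neg (d : ℝ) : d + max (-d) 0 = max d 0 := by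
  rcases le_total 0 d with h | h
  · rw [max_eq_right (neg_nonpos.mpr h), add_zero, max_eq_left h]
  · rw [max_eq_left (neg_nonneg.mpr h), max_eq_right h, add_neg_cancel]

lemma balance {g : ℝ → ℝ} {a s : ℝ} (has : a < s) :
    pVar (fun x => max x 0) g a s + ENNReal.ofReal (g a - g s) =
      pVar (fun x => max (-x) 0) g a s + ENNReal.ofReal (g s - g a) := by
  haveI := EP.nonempty has
  rw [pVar_eq_eVar has, pVar_eq_eVar has]
  unfold eVar
  rw [iSup_add, iSup_add]
  refine iSup_congr fun p => ?_
  have hk := key_telescope (g := g) p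
  rw [pS_eq_ofReal posmax_nonneg, pS_eq_ofReal negmax_nonneg,
    ← ofReal_max0 (g a - g s), ← ofReal_max0 (g s - g a),
    ← ENNReal.ofReal_add (rS_nonneg posmax_nonneg) (le_max_right _ _),
    ← ENNReal.ofReal_add (rS_nonneg negmax_nonneg) (le_max_right _ _)]
  congr 1
  have h1 : g a - g s = -(g s - g a) := by ring
  rw [h1]
  have h2 := add_max_neg (g s - g a)
  linarith


/-- For a minimizer `g`, the value `g s - g a` is pinned down by `f`. -/
lemma step {f g : ℝ → ℝ} {a b s c : ℝ} (hs : s ∈ Set.Ioc a b) (hc : 0 < c)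
    (happrox : ∀ x ∈ Set.Icc a b, |f x - g x| ≤ c / 2)
    (hfin : pVar (fun x => max (|x| - 0) 0) g a b < ⊤)
    (hopt : pVar (fun x => max (|x| - 0) 0) g a s ≤ pVar (fun x => max (|x| - c) 0) f a s) :
    g s - g a = (pVar (fun x => max (x - c) 0) f a s).toReal
      - (pVar (fun x => max (-x - c) 0) f a s).toReal := by
  have has : a < s := hs.1
  have hsub : Set.Icc a s ⊆ Set.Icc a b := Set.Icc_subset_Icc le_rfl hs.2
  set UV := pVar (fun x => max x 0) g a s with hUVdef
  set DV := pVar (fun x => max (-x) 0) g a s with hDVdef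
  set UT := pVar (fun x => max (x - c) 0) f a s with hUTdef
  set DT := pVar (fun x => max (-x - c) 0) f a s with hDTdef
  set T := pVar (fun x => max (|x| - 0) 0) g a s with hTdef
  have h1 : UT ≤ UV := by
    refine pVar_mono_fun (fun u v hu hv huv => ?_) posmax_nonneg
    have e1 := happrox u (hsub hu)
    have e2 := happrox v (hsub hv)
    rw [abs_le] at e1 e2
    exact max_le_max (by linarith) le_rfl
  have h2 : DT ≤ DV := by
    refine pVar_mono_fun (fun u v hu hv huv => ?_) negmax_nonneg
    have e1 := happrox u (hsub hu)
    have e2 := happrox v (hsub hv)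
    rw [abs_le] at e1 e2
    exact max_le_max (by linarith) le_rfl
  have h3 : UV + DV ≤ T := jordan has
  have h5 : pVar (fun x => max (|x| - c) 0) f a s ≤ UT + DT := pVar_abs_split hc.le
  have hTne : T ≠ ⊤ := by
    refine ne_top_of_le_ne_top hfin.ne (pVar_mono_right hs.2)
  have hUVle : UV ≤ T := by
    refine pVar_mono_fun (fun u v _ _ _ => ?_) (absmax_nonneg 0)
    rw [sub_zero]
    exact max_le_max (le_abs_self _) le_rfl
  have hDVle : DV ≤ T := by
    refine pVar_mono_fun (fun u v _ _ _ => ?_) (absmax_nonneg 0)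
    rw [sub_zero]
    exact max_le_max (neg_le_abs _) le_rfl
  have hUVne : UV ≠ ⊤ := ne_top_of_le_ne_top hTne hUVle
  have hDVne : DV ≠ ⊤ := ne_top_of_le_ne_top hTne hDVle
  have hUTne : UT ≠ ⊤ := ne_top_of_le_ne_top hUVne h1
  have hDTne : DT ≠ ⊤ := ne_top_of_le_ne_top hDVne h2
  have hchain : UV + DV ≤ UT + DT := le_trans h3 (le_trans hopt h5)
  have hUVeq : UV = UT := by
    refine le_antisymm ?_ h1
    have : UV + DV ≤ UT + DV := le_trans hchain (add_le_add_right h2 UT)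
    exact (ENNReal.add_le_add_iff_right hDVne).mp this
  have hDVeq : DV = DT := by
    refine le_antisymm ?_ h2
    have : UV + DV ≤ UV + DT := le_trans hchain (add_le_add_left h1 DT)
    exact (ENNReal.add_le_add_iff_left hUVne).mp this
  have hbal := balance (g := g) has
  rw [← hUVdef, ← hDVdef, hUVeq, hDVeq] at hbal
  -- convert to reals
  have := congrArg ENNReal.toReal hbal
  rw [ENNReal.toReal_add hUTne ENNReal.ofReal_ne_top,
    ENNReal.toReal_add hDTne ENNReal.ofReal_ne_top] at this
  have hta : (ENNReal.ofReal (g a - g s)).toReal = max (g a - g s) 0 := by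
    rw [← ofReal_max0, ENNReal.toReal_ofReal (le_max_right _ _)]
  have hts : (ENNReal.ofReal (g s - g a)).toReal = max (g s - g a) 0 := by
    rw [← ofReal_max0, ENNReal.toReal_ofReal (le_max_right _ _)]
  rw [hta, hts] at this
  have hmx := max_zero_sub_max_neg_zero_eq_self (g s - g a)
  have hneg : g a - g s = -(g s - g a) := by ring
  rw [hneg] at this
  linarith

/-- oscillation lower bound for truncated variation. -/
lemma osc_lower {f : ℝ → ℝ} {a b c c' : ℝ} (hc : 0 < c) (hcc' : c' < c) (hc'0 : 0 ≤ c')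
    (hcsup : c ≤ ⨆ s ∈ Set.Icc a b, ⨆ u ∈ Set.Icc a b, |f s - f u|) :
    ENNReal.ofReal (c - c') ≤ pVar (fun x => max (|x| - c') 0) f a b := by
  refine ENNReal.le_of_forall_pos_le_add fun ε hε hlt => ?_
  set δ : ℝ := min (ε : ℝ) ((c - c') / 2) with hδdef
  have hδpos : 0 < δ := lt_min (by exact_mod_cast hε) (by linarith)
  have hδle : δ ≤ (c - c') / 2 := min_le_right _ _
  have hy0 : 0 < c - δ := by linarith
  have h1 : c - δ < ⨆ s ∈ Set.Icc a b, ⨆ u ∈ Set.Icc a b, |f s - f u| :=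
    lt_of_lt_of_le (by linarith) hcsup
  obtain ⟨p, hp⟩ := exists_lt_of_lt_ciSup h1
  have hpmem : p ∈ Set.Icc a b := by
    by_contra hmem
    haveI : IsEmpty (p ∈ Set.Icc a b) := ⟨hmem⟩
    rw [Real.iSup_of_isEmpty] at hp
    linarith
  haveI : Nonempty (p ∈ Set.Icc a b) := ⟨hpmem⟩
  rw [ciSup_const] at hp
  obtain ⟨q, hq⟩ := exists_lt_of_lt_ciSup hp
  have hqmem : q ∈ Set.Icc a b := by
    by_contra hmem
    haveI : IsEmpty (q ∈ Set.Icc a b) := ⟨hmem⟩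
    rw [Real.iSup_of_isEmpty] at hq
    linarith
  haveI : Nonempty (q ∈ Set.Icc a b) := ⟨hqmem⟩
  rw [ciSup_const] at hq
  -- hq : c - δ < |f p - f q|
  obtain ⟨v, w, hvmem, hwmem, hvw, habs⟩ :
      ∃ v w, v ∈ Set.Icc a b ∧ w ∈ Set.Icc a b ∧ v < w ∧ c - δ < |f w - f v| := by
    rcases lt_trichotomy p q with h | h | h
    · exact ⟨p, q, hpmem, hqmem, h, by rwa [abs_sub_comm]⟩
    · exfalso; rw [h, sub_self, abs_zero] at hq; linarith
    · exact ⟨q, p, hqmem, hpmem, h, hq⟩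
  -- single increment partition
  set t : ℕ → ℝ := fun i => if i = 0 then v else w with htdef
  have hvalid2 : ∀ i < 1, t i < t (i + 1) := by
    intro i hi
    interval_cases i
    simpa [htdef] using hvw
  have hS : pS (fun x => max (|x| - c') 0) f 1 t = ENNReal.ofReal (max (|f w - f v| - c') 0) := by
    unfold pS
    rw [Finset.sum_range_one]
    simp [htdef]
  have hle : ENNReal.ofReal (c - δ - c') ≤ pVar (fun x => max (|x| - c') 0) f a b := by
    refine le_trans ?_ (le_pVar (n := 1) (t := t) (by simpa [htdef] using hvmem.1) hvalid2
      (by simpa [htdef] using hwmem.2))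
    rw [hS]
    refine ENNReal.ofReal_le_ofReal ?_
    refine le_trans (by linarith) (le_max_left _ _)
  calc ENNReal.ofReal (c - c') = ENNReal.ofReal ((c - δ - c') + δ) := by ring_nf
    _ ≤ ENNReal.ofReal (c - δ - c') + ENNReal.ofReal δ := ENNReal.ofReal_add_le
    _ ≤ pVar (fun x => max (|x| - c') 0) f a b + ↑ε := by
        refine add_le_add hle ?_
        rw [← ENNReal.ofReal_coe_nnreal]
        exact ENNReal.ofReal_le_ofReal (min_le_left _ _)


lemma lt_pVar {φ g : ℝ → ℝ} {a b : ℝ} {y : ℝ≥0∞} (h : y < pVar φ g a b) :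
    ∃ n t, a ≤ t 0 ∧ (∀ i < n, t i < t (i + 1)) ∧ t n ≤ b ∧ y < pS φ g n t := by
  unfold pVar at h
  simp only [lt_iSup_iff] at h
  obtain ⟨n, t, h1, h2, h3, h4⟩ := h
  exact ⟨n, t, h1, h2, h3, h4⟩

lemma strict_dec {f : ℝ → ℝ} {a b c c' : ℝ} (hc : 0 < c) (hcc' : c' < c) (hc'0 : 0 ≤ c')
    (hcsup : c ≤ ⨆ s ∈ Set.Icc a b, ⨆ u ∈ Set.Icc a b, |f s - f u|)
    (hfin : pVar (fun x => max (|x| - c) 0) f a b ≠ ⊤)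
    (hle : pVar (fun x => max (|x| - c') 0) f a b ≤ pVar (fun x => max (|x| - c) 0) f a b) :
    False := by
  have hk2pos : (0:ℝ≥0∞) < ENNReal.ofReal ((c - c') / 2) :=
    ENNReal.ofReal_pos.mpr (by linarith)
  have hosc := osc_lower hc hcc' hc'0 hcsup
  by_cases hxs : pVar (fun x => max (|x| - c) 0) f a b ≤ ENNReal.ofReal ((c - c') / 2)
  · have h1 : ENNReal.ofReal (c - c') ≤ ENNReal.ofReal ((c - c') / 2) :=
      le_trans hosc (le_trans hle hxs)
    have h2 := (ENNReal.ofReal_le_ofReal_iff (by linarith)).mp h1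
    linarith
  · push_neg at hxs
    have hxne0 : pVar (fun x => max (|x| - c) 0) f a b ≠ 0 :=
      fun h => by rw [h] at hxs; exact (not_lt_of_ge zero_le) hxs
    have hsub : pVar (fun x => max (|x| - c) 0) f a b - ENNReal.ofReal ((c - c') / 2)
        < pVar (fun x => max (|x| - c) 0) f a b :=
      ENNReal.sub_lt_self hfin hxne0 (ne_of_gt hk2pos)
    obtain ⟨n, t, h1, h2, h3, hgt⟩ := lt_pVar hsub
    have hposS : (0:ℝ≥0∞) < pS (fun x => max (|x| - c) 0) f n t :=
      lt_of_le_of_lt zero_le hgt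
    obtain ⟨i, hi, hterm⟩ : ∃ i ∈ Finset.range n,
        ENNReal.ofReal (max (|f (t (i + 1)) - f (t i)| - c) 0) ≠ 0 := by
      apply Finset.exists_ne_zero_of_sum_ne_zero
      rw [show (∑ j ∈ Finset.range n, ENNReal.ofReal (max (|f (t (j + 1)) - f (t j)| - c) 0))
        = pS (fun x => max (|x| - c) 0) f n t from rfl]
      exact ne_of_gt hposS
    have hbig : c < |f (t (i + 1)) - f (t i)| := by
      have h0 : 0 < max (|f (t (i + 1)) - f (t i)| - c) 0 := by
        by_contra hcon
        push_neg at hcon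
        exact hterm (ENNReal.ofReal_eq_zero.mpr hcon)
      rcases lt_max_iff.mp h0 with h | h
      · linarith
      · exact absurd h (lt_irrefl 0)
    have hterm_eq : ENNReal.ofReal (max (|f (t (i + 1)) - f (t i)| - c) 0)
        + ENNReal.ofReal (c - c')
        = ENNReal.ofReal (max (|f (t (i + 1)) - f (t i)| - c') 0) := by
      rw [← ENNReal.ofReal_add (le_max_right _ _) (by linarith)]
      congr 1
      rw [max_eq_left (by linarith : (0:ℝ) ≤ |f (t (i + 1)) - f (t i)| - c),
        max_eq_left (by linarith : (0:ℝ) ≤ |f (t (i + 1)) - f (t i)| - c')]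
      ring
    have hkey : pS (fun x => max (|x| - c) 0) f n t + ENNReal.ofReal (c - c')
        ≤ pS (fun x => max (|x| - c') 0) f n t := by
      unfold pS
      rw [← Finset.add_sum_erase _ _ hi, ← Finset.add_sum_erase _ _ hi]
      have hrest : ∑ j ∈ (Finset.range n).erase i,
          ENNReal.ofReal ((fun x => max (|x| - c) 0) (f (t (j + 1)) - f (t j)))
          ≤ ∑ j ∈ (Finset.range n).erase i,
          ENNReal.ofReal ((fun x => max (|x| - c') 0) (f (t (j + 1)) - f (t j))) :=
        Finset.sum_le_sum fun j _ =>
          ENNReal.ofReal_le_ofReal (max_le_max (by linarith) le_rfl)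
      calc ENNReal.ofReal ((fun x => max (|x| - c) 0) (f (t (i + 1)) - f (t i)))
            + ∑ j ∈ (Finset.range n).erase i,
              ENNReal.ofReal ((fun x => max (|x| - c) 0) (f (t (j + 1)) - f (t j)))
            + ENNReal.ofReal (c - c')
          = (ENNReal.ofReal (max (|f (t (i + 1)) - f (t i)| - c) 0) + ENNReal.ofReal (c - c'))
            + ∑ j ∈ (Finset.range n).erase i,
              ENNReal.ofReal ((fun x => max (|x| - c) 0) (f (t (j + 1)) - f (t j))) := by
            dsimp only; ring
        _ = ENNReal.ofReal (max (|f (t (i + 1)) - f (t i)| - c') 0)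
            + ∑ j ∈ (Finset.range n).erase i,
              ENNReal.ofReal ((fun x => max (|x| - c) 0) (f (t (j + 1)) - f (t j))) := by
            rw [hterm_eq]
        _ ≤ _ := add_le_add_right hrest _
    have hksplit : ENNReal.ofReal (c - c')
        = ENNReal.ofReal ((c - c') / 2) + ENNReal.ofReal ((c - c') / 2) := by
      rw [← ENNReal.ofReal_add (by linarith) (by linarith)]
      congr 1
      ring
    have hstep1 : pVar (fun x => max (|x| - c) 0) f a b - ENNReal.ofReal ((c - c') / 2)
        + ENNReal.ofReal (c - c')
        < pS (fun x => max (|x| - c) 0) f n t + ENNReal.ofReal (c - c') := by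
      rw [ENNReal.add_lt_add_iff_right ENNReal.ofReal_ne_top]
      exact hgt
    have hcancel : pVar (fun x => max (|x| - c) 0) f a b - ENNReal.ofReal ((c - c') / 2)
        + ENNReal.ofReal (c - c')
        = pVar (fun x => max (|x| - c) 0) f a b + ENNReal.ofReal ((c - c') / 2) := by
      rw [hksplit, ← add_assoc, tsub_add_cancel_of_le hxs.le]
    have hfinal : pVar (fun x => max (|x| - c) 0) f a b
        < pVar (fun x => max (|x| - c') 0) f a b := by
      calc pVar (fun x => max (|x| - c) 0) f a b
          ≤ pVar (fun x => max (|x| - c) 0) f a b + ENNReal.ofReal ((c - c') / 2) := le_self_add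
        _ = pVar (fun x => max (|x| - c) 0) f a b - ENNReal.ofReal ((c - c') / 2)
            + ENNReal.ofReal (c - c') := hcancel.symm
        _ < pS (fun x => max (|x| - c) 0) f n t + ENNReal.ofReal (c - c') := hstep1
        _ ≤ pS (fun x => max (|x| - c') 0) f n t := hkey
        _ ≤ pVar (fun x => max (|x| - c') 0) f a b := le_pVar h1 h2 h3
    exact absurd hle (not_le_of_gt hfinal)

end OptApproxAux

open OptApproxAux in
/-- Uniqueness of the optimal uniform approximation with minimal total variation. -/
theorem optimal_uniform_approx_unique
    (a b c : ℝ) (hab : a < b) (hc : 0 < c) (f : ℝ → ℝ) (hf : CadlagOn f a b)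
    (hcsup : c ≤ ⨆ s ∈ Set.Icc a b, ⨆ u ∈ Set.Icc a b, |f s - f u|)
    (g₁ g₂ : ℝ → ℝ)
    (happrox₁ : ∀ s ∈ Set.Icc a b, |f s - g₁ s| ≤ c / 2)
    (happrox₂ : ∀ s ∈ Set.Icc a b, |f s - g₂ s| ≤ c / 2)
    (hfin₁ : totalVar g₁ a b < ⊤) (hfin₂ : totalVar g₂ a b < ⊤)
    (hopt₁ : ∀ s ∈ Set.Ioc a b, totalVar g₁ a s ≤ truncVar f a s c)
    (hopt₂ : ∀ s ∈ Set.Ioc a b, totalVar g₂ a s ≤ truncVar f a s c) :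
    ∀ s ∈ Set.Icc a b, g₁ s = g₂ s := by
  have tveq : ∀ (g : ℝ → ℝ) (s : ℝ), totalVar g a s = pVar (fun x => max (|x| - 0) 0) g a s :=
    fun _ _ => rfl
  have tceq : ∀ (c' s : ℝ), truncVar f a s c' = pVar (fun x => max (|x| - c') 0) f a s :=
    fun _ _ => rfl
  have hdiff : ∀ s ∈ Set.Icc a b, g₁ s - g₂ s = g₁ a - g₂ a := by
    intro s hs
    rcases eq_or_lt_of_le hs.1 with h | h
    · rw [← h]
    · have hs' : s ∈ Set.Ioc a b := ⟨h, hs.2⟩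
      have e1 := step hs' hc happrox₁ (by rw [← tveq]; exact hfin₁)
        (by rw [← tveq, ← tceq]; exact hopt₁ s hs')
      have e2 := step hs' hc happrox₂ (by rw [← tveq]; exact hfin₂)
        (by rw [← tveq, ← tceq]; exact hopt₂ s hs')
      linarith
  by_cases hd0 : g₁ a - g₂ a = 0
  · intro s hs
    have := hdiff s hs
    linarith
  · exfalso
    set d := g₁ a - g₂ a with hddef
    have hdband : |d| ≤ c := by
      have e1 := happrox₁ a ⟨le_rfl, hab.le⟩
      have e2 := happrox₂ a ⟨le_rfl, hab.le⟩
      rw [abs_le] at e1 e2 ⊢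
      constructor <;> linarith
    have habsd : 0 < |d| := abs_pos.mpr hd0
    have hc'0 : 0 ≤ c - |d| := by linarith
    have hc'c : c - |d| < c := by linarith
    have band : ∀ x ∈ Set.Icc a b, |f x - (g₁ x - d / 2)| ≤ (c - |d|) / 2 := by
      intro x hx
      have e1 := happrox₁ x hx
      have e2 := happrox₂ x hx
      have e3 : g₂ x = g₁ x - d := by have := hdiff x hx; linarith
      rw [e3] at e2
      rw [abs_le] at e1 e2 ⊢
      rcases le_total 0 d with h | h
      · rw [abs_of_nonneg h]; constructor <;> linarith
      · rw [abs_of_nonpos h]; constructor <;> linarith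
    have happroxh : ∀ u v, u ∈ Set.Icc a b → v ∈ Set.Icc a b → u < v →
        max (|f v - f u| - (c - |d|)) 0 ≤ max (|g₁ v - g₁ u| - 0) 0 := by
      intro u v hu hv _
      have e1 := band u hu
      have e2 := band v hv
      have h3 : f v - f u
          = ((f v - (g₁ v - d / 2)) - (f u - (g₁ u - d / 2))) + (g₁ v - g₁ u) := by ring
      have h4 : |f v - f u|
          ≤ |(f v - (g₁ v - d / 2)) - (f u - (g₁ u - d / 2))| + |g₁ v - g₁ u| := by
        rw [h3]; exact abs_add_le _ _
      have h5 : |(f v - (g₁ v - d / 2)) - (f u - (g₁ u - d / 2))|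
          ≤ |f v - (g₁ v - d / 2)| + |f u - (g₁ u - d / 2)| := abs_sub _ _
      rw [sub_zero]
      exact max_le_max (by linarith) le_rfl
    have hle1 : pVar (fun x => max (|x| - (c - |d|)) 0) f a b ≤
        pVar (fun x => max (|x| - 0) 0) g₁ a b := pVar_mono_fun happroxh (absmax_nonneg 0)
    have hle2 : pVar (fun x => max (|x| - 0) 0) g₁ a b
        ≤ pVar (fun x => max (|x| - c) 0) f a b := by
      rw [← tveq, ← tceq]; exact hopt₁ b ⟨hab, le_rfl⟩
    have hg1fin : pVar (fun x => max (|x| - 0) 0) g₁ a b ≠ ⊤ := by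
      rw [← tveq]; exact hfin₁.ne
    have hfinc : pVar (fun x => max (|x| - c) 0) f a b ≠ ⊤ := by
      refine ne_top_of_le_ne_top hg1fin ?_
      refine pVar_mono_fun (fun u v hu hv _ => ?_) (absmax_nonneg 0)
      have e1 := happrox₁ u hu
      have e2 := happrox₁ v hv
      have h3 : f v - f u = ((f v - g₁ v) - (f u - g₁ u)) + (g₁ v - g₁ u) := by ring
      have h4 : |f v - f u| ≤ |(f v - g₁ v) - (f u - g₁ u)| + |g₁ v - g₁ u| := by
        rw [h3]; exact abs_add_le _ _
      have h5 : |(f v - g₁ v) - (f u - g₁ u)| ≤ |f v - g₁ v| + |f u - g₁ u| := abs_sub _ _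
      rw [sub_zero]
      exact max_le_max (by linarith) le_rfl
    exact strict_dec hc hc'c hc'0 hcsup hfinc (le_trans hle1 hle2)
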